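/- Let V be a free A-module of rank 2ν over a commutative ring A with a nondegenerate alternating A-bilinear form ω, split as V = L ⊕ L' with both L and L' Lagrangian, with basis e_1,...,e_ν of L and e_{ν+1},...,e_{2ν} of L'. Let Υ₀ be the set of nonincreasing index sequences and e_I = e_{i₁}⊗...⊗e_{i_p} for I = (i₁ ≥ ... ≥ i_p). Then the images {μ_W(e_I) : I ∈ Υ₀} form an A-basis of the Weyl algebra W(V) = T(V)/I_W, and the images {μ_S(e_I) : I ∈ Υ₀} form an A-basis of the symmetric algebra S(V). -/

import Mathlib

/-- The Weyl relation on the tensor algebra `T(V)`: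
`x ⊗ y − y ⊗ x ~ λ ω(x,y)` for `x, y ∈ V`. -/
def weylRel (A V : Type*) [CommRing A] [AddCommGroup V] [Module A V]
    (ω : V →ₗ[A] V →ₗ[A] A) (lam : A) :
    TensorAlgebra A V → TensorAlgebra A V → Prop := fun a b =>
  ∃ x y : V,
    a = TensorAlgebra.ι A x * TensorAlgebra.ι A y -
        TensorAlgebra.ι A y * TensorAlgebra.ι A x ∧
    b = algebraMap A (TensorAlgebra A V) (lam * ω x y)

/-- The Weyl algebra `W(V) = T(V)/I_W`. -/
def WeylAlgebra (A V : Type*) [CommRing A] [AddCommGroup V] [Module A V]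
    (ω : V →ₗ[A] V →ₗ[A] A) (lam : A) : Type _ :=
  RingQuot (weylRel A V ω lam)

noncomputable instance (A V : Type*) [CommRing A] [AddCommGroup V] [Module A V]
    (ω : V →ₗ[A] V →ₗ[A] A) (lam : A) : Ring (WeylAlgebra A V ω lam) :=
  inferInstanceAs (Ring (RingQuot (weylRel A V ω lam)))

noncomputable instance (A V : Type*) [CommRing A] [AddCommGroup V] [Module A V]
    (ω : V →ₗ[A] V →ₗ[A] A) (lam : A) : Algebra A (WeylAlgebra A V ω lam) :=
  inferInstanceAs (Algebra A (RingQuot (weylRel A V ω lam)))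

/-- The canonical projection `μ_W : T(V) → W(V)` as an `A`-linear map. -/
noncomputable def muW (A V : Type*) [CommRing A] [AddCommGroup V] [Module A V]
    (ω : V →ₗ[A] V →ₗ[A] A) (lam : A) :
    TensorAlgebra A V →ₗ[A] WeylAlgebra A V ω lam :=
  (RingQuot.mkAlgHom A (weylRel A V ω lam)).toLinearMap

/-- The symmetry relation on the tensor algebra. -/
def symCRel (A V : Type*) [CommRing A] [AddCommGroup V] [Module A V] :
    TensorAlgebra A V → TensorAlgebra A V → Prop := fun a b =>
  ∃ x y : V, a = TensorAlgebra.ι A x * TensorAlgebra.ι A y ∧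
    b = TensorAlgebra.ι A y * TensorAlgebra.ι A x

/-- The symmetric algebra `S(V) = T(V)/I_S`, realized as the quotient of the tensor
algebra by the symmetry relation. -/
def SymCAlg (A V : Type*) [CommRing A] [AddCommGroup V] [Module A V] : Type _ :=
  RingQuot (symCRel A V)

noncomputable instance (A V : Type*) [CommRing A] [AddCommGroup V] [Module A V] :
    Ring (SymCAlg A V) := inferInstanceAs (Ring (RingQuot (symCRel A V)))

noncomputable instance (A V : Type*) [CommRing A] [AddCommGroup V] [Module A V] :
    Algebra A (SymCAlg A V) := inferInstanceAs (Algebra A (RingQuot (symCRel A V)))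

/-- The canonical projection `μ_S : T(V) → S(V)` as an `A`-linear map. -/
noncomputable def muS (A V : Type*) [CommRing A] [AddCommGroup V] [Module A V] :
    TensorAlgebra A V →ₗ[A] SymCAlg A V :=
  (RingQuot.mkAlgHom A (symCRel A V)).toLinearMap

/-- The set `Υ₀` of nonincreasing index sequences in `{0, ..., 2ν-1}`. -/
def NonincSeq (ν : ℕ) : Type :=
  {l : List (Fin (2 * ν)) // List.Pairwise (fun a b => b ≤ a) l}

/-- The ordered tensor monomial `e_I = e_{i₁} ⊗ ⋯ ⊗ e_{i_p} ∈ T(V)`. -/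
noncomputable def tensorMon (A V : Type*) [CommRing A] [AddCommGroup V] [Module A V]
    {ν : ℕ} (e : Fin (2 * ν) → V) (l : List (Fin (2 * ν))) : TensorAlgebra A V :=
  (l.map fun i => TensorAlgebra.ι A (e i)).prod


open MvPolynomial Finsupp Module

namespace PBWAux

variable {A : Type*} [CommRing A] {N : ℕ}

/-! ### Operators on the polynomial module -/

noncomputable def Lop (i : Fin N) : Module.End A (MvPolynomial (Fin N) A) :=
  LinearMap.mulLeft A (X i)

noncomputable def Gop (j : Fin N) : Module.End A (MvPolynomial (Fin N) A) :=
  (pderiv j).toLinearMap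

noncomputable def Dop (b : Fin N → Fin N → A) (i : Fin N) :
    Module.End A (MvPolynomial (Fin N) A) :=
  ∑ j : Fin N, (if i < j then b i j else 0) • Gop j

noncomputable def Top (b : Fin N → Fin N → A) (i : Fin N) :
    Module.End A (MvPolynomial (Fin N) A) :=
  Lop i + Dop b i

theorem pderiv_comm' (j m : Fin N) (p : MvPolynomial (Fin N) A) :
    pderiv j (pderiv m p) = pderiv m (pderiv j p) := by
  induction p using MvPolynomial.induction_on' with
  | monomial s a =>
    simp only [pderiv_monomial]
    rw [tsub_tsub, tsub_tsub, add_comm]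
    congr 1
    rcases eq_or_ne j m with rfl | h
    · ring
    · rw [tsub_apply, tsub_apply, single_apply, single_apply,
        if_neg h, if_neg (Ne.symm h)]
      push_cast [Nat.sub_zero]
      ring
  | add p q hp hq => simp [hp, hq]

theorem Lop_Lop (i k : Fin N) : (Lop i : Module.End A (MvPolynomial (Fin N) A)) * Lop k
    = Lop k * Lop i := by
  refine LinearMap.ext fun p => ?_
  simp only [Lop, Module.End.mul_apply, LinearMap.mulLeft_apply, ← mul_assoc,
    mul_comm (X i) (X k)]

theorem Gop_Gop (j m : Fin N) : (Gop j : Module.End A (MvPolynomial (Fin N) A)) * Gop m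
    = Gop m * Gop j := by
  refine LinearMap.ext fun p => ?_
  simpa only [Gop, Module.End.mul_apply, Derivation.coeFn_coe] using pderiv_comm' j m p

theorem Gop_Lop (j k : Fin N) : (Gop j : Module.End A (MvPolynomial (Fin N) A)) * Lop k
    = Lop k * Gop j + if j = k then 1 else 0 := by
  refine LinearMap.ext fun p => ?_
  rcases eq_or_ne j k with rfl | h
  · simp [Gop, Lop, Module.End.mul_apply, pderiv_mul]
  · simp [Gop, Lop, Module.End.mul_apply, pderiv_mul, pderiv_X_of_ne (Ne.symm h), h]

theorem Dop_Lop (b : Fin N → Fin N → A) (i k : Fin N) :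
    Dop b i * Lop k = Lop k * Dop b i
      + algebraMap A (Module.End A (MvPolynomial (Fin N) A)) (if i < k then b i k else 0) := by
  rw [Dop, Finset.sum_mul, Finset.mul_sum]
  have h1 : ∀ j ∈ Finset.univ, ((if i < j then b i j else 0) • Gop j) * Lop k
        = Lop k * ((if i < j then b i j else 0) • Gop j)
          + (if j = k then (if i < k then b i k else 0)
              • (1 : Module.End A (MvPolynomial (Fin N) A)) else 0) := by
    intro j _
    rw [smul_mul_assoc, Gop_Lop, smul_add, mul_smul_comm]
    congr 1
    rcases eq_or_ne j k with rfl | h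
    · simp
    · simp [h]
  rw [Finset.sum_congr rfl h1, Finset.sum_add_distrib, Finset.sum_ite_eq' Finset.univ k,
    if_pos (Finset.mem_univ k), Algebra.algebraMap_eq_smul_one]

theorem Dop_Dop (b : Fin N → Fin N → A) (i k : Fin N) :
    Dop b i * Dop b k = Dop b k * Dop b i := by
  rw [Dop, Dop, Finset.sum_mul_sum, Finset.sum_mul_sum]
  rw [Finset.sum_comm]
  refine Finset.sum_congr rfl fun j _ => Finset.sum_congr rfl fun m _ => ?_
  rw [smul_mul_assoc, smul_mul_assoc, mul_smul_comm, mul_smul_comm, Gop_Gop, smul_comm]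

theorem Top_comm (b : Fin N → Fin N → A) (hskew : ∀ i j, b j i = - b i j)
    (hdiag : ∀ i, b i i = 0) (i k : Fin N) :
    Top b i * Top b k - Top b k * Top b i
      = algebraMap A (Module.End A (MvPolynomial (Fin N) A)) (b i k) := by
  have hc : (if i < k then b i k else 0) - (if k < i then b k i else 0) = b i k := by
    rcases lt_trichotomy i k with h | rfl | h
    · rw [if_pos h, if_neg (asymm h), sub_zero]
    · simp [hdiag]
    · rw [if_neg (asymm h), if_pos h, zero_sub, hskew i k, neg_neg]
  rw [← hc, map_sub, Top, Top, add_mul, add_mul, mul_add, mul_add, mul_add, mul_add,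
    Dop_Lop b i k, Dop_Lop b k i, Lop_Lop k i, Dop_Dop b k i]
  abel

/-! ### Action on monomials -/

theorem Top_monomial (b : Fin N → Fin N → A) (i : Fin N) (γ : Fin N →₀ ℕ) :
    Top b i (monomial γ 1) = monomial (γ + single i 1) 1 +
      ∑ m : Fin N, ((if i < m then b i m else 0) * (γ m : A)) •
        monomial (γ - single m 1) 1 := by
  simp only [Top, Lop, Dop, Gop, LinearMap.add_apply, LinearMap.mulLeft_apply,
    LinearMap.sum_apply, LinearMap.smul_apply, Derivation.coeFn_coe, pderiv_monomial, one_mul]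
  congr 1
  · rw [X, monomial_mul, one_mul, add_comm]
  · refine Finset.sum_congr rfl fun m _ => ?_
    rw [mul_smul]
    congr 1
    rw [smul_monomial, smul_eq_mul, mul_one]

theorem Top_monomial_easy (b : Fin N → Fin N → A) (i : Fin N) (γ : Fin N →₀ ℕ)
    (h : ∀ m, i < m → γ m = 0) :
    Top b i (monomial γ 1) = monomial (γ + single i 1) 1 := by
  rw [Top_monomial, add_eq_left]
  refine Finset.sum_eq_zero fun m _ => ?_
  rcases lt_or_ge i m with hm | hm
  · rw [h m hm]; simp
  · rw [if_neg (not_lt.mpr hm)]; simp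

/-! ### Sorted lists and multidegrees -/

noncomputable def cnt (l : List (Fin N)) : Fin N →₀ ℕ := Multiset.toFinsupp (l : Multiset (Fin N))

noncomputable def srt (γ : Fin N →₀ ℕ) : List (Fin N) :=
  Multiset.sort (Finsupp.toMultiset γ) (fun a b => b ≤ a)

theorem cnt_srt (γ : Fin N →₀ ℕ) : cnt (srt γ) = γ := by
  rw [cnt, srt, Multiset.sort_eq, Finsupp.toMultiset_toFinsupp]

theorem srt_sorted (γ : Fin N →₀ ℕ) : (srt γ).Pairwise (fun a b => b ≤ a) :=
  Multiset.pairwise_sort _ _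

theorem srt_cnt {l : List (Fin N)} (hl : l.Pairwise (fun a b => b ≤ a)) : srt (cnt l) = l := by
  refine List.Perm.eq_of_pairwise' (srt_sorted _) hl ?_
  rw [← Multiset.coe_eq_coe, srt, cnt, Multiset.sort_eq, Multiset.toFinsupp_toMultiset]

theorem cnt_nil : cnt ([] : List (Fin N)) = 0 := by
  simp [cnt]

theorem srt_zero : srt (0 : Fin N →₀ ℕ) = [] := by
  rw [srt, Finsupp.toMultiset_zero, Multiset.sort_zero]

theorem cnt_cons (i : Fin N) (l : List (Fin N)) : cnt (i :: l) = cnt l + single i 1 := by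
  rw [cnt, cnt, ← Multiset.cons_coe, ← Multiset.singleton_add, map_add,
    Multiset.toFinsupp_singleton, add_comm]

theorem cnt_apply (l : List (Fin N)) (j : Fin N) : cnt l j = l.count j := by
  rw [cnt, Multiset.toFinsupp_apply, Multiset.coe_count]

theorem mem_srt {γ : Fin N →₀ ℕ} {j : Fin N} : j ∈ srt γ ↔ γ j ≠ 0 := by
  rw [srt, Multiset.mem_sort, Finsupp.mem_toMultiset]
  exact Finsupp.mem_support_iff

def deg (γ : Fin N →₀ ℕ) : ℕ := ∑ j : Fin N, γ j

theorem deg_add_single (γ : Fin N →₀ ℕ) (i : Fin N) : deg (γ + single i 1) = deg γ + 1 := by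
  simp only [deg, Finsupp.coe_add, Pi.add_apply, Finset.sum_add_distrib, single_apply,
    Finset.sum_ite_eq, Finset.mem_univ, if_pos]

theorem deg_tsub_le (γ : Fin N →₀ ℕ) (m : Fin N) : deg (γ - single m 1) ≤ deg γ := by
  refine Finset.sum_le_sum fun j _ => ?_
  rw [tsub_apply]
  exact Nat.sub_le _ _


/-! ### The representation of the tensor algebra -/

section Rep

variable {V : Type*} [AddCommGroup V] [Module A V]

/-- Structure constants of the bilinear form on the basis. -/
noncomputable def bco (e : Basis (Fin N) A V) (β : V →ₗ[A] V →ₗ[A] A) : Fin N → Fin N → A :=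
  fun i j => β (e i) (e j)

noncomputable def tau (e : Basis (Fin N) A V) (β : V →ₗ[A] V →ₗ[A] A) :
    V →ₗ[A] Module.End A (MvPolynomial (Fin N) A) :=
  Basis.constr e A fun i => Top (bco e β) i

theorem tau_basis (e : Basis (Fin N) A V) (β : V →ₗ[A] V →ₗ[A] A) (i : Fin N) :
    tau e β (e i) = Top (bco e β) i :=
  Basis.constr_basis e A _ i

theorem skew_of_alt (β : V →ₗ[A] V →ₗ[A] A) (hβ : ∀ x, β x x = 0) (x y : V) :
    β y x = - β x y := by
  have h := hβ (x + y)
  simp only [map_add, LinearMap.add_apply, hβ x, hβ y, zero_add, add_zero] at h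
  exact eq_neg_of_add_eq_zero_left h

theorem tau_comm (e : Basis (Fin N) A V) (β : V →ₗ[A] V →ₗ[A] A)
    (hβ : ∀ x, β x x = 0) (x y : V) :
    tau e β x * tau e β y - tau e β y * tau e β x
      = algebraMap A (Module.End A (MvPolynomial (Fin N) A)) (β x y) := by
  have hbase : ∀ (i : Fin N) (z : V),
      tau e β z * tau e β (e i) - tau e β (e i) * tau e β z
        = algebraMap A (Module.End A (MvPolynomial (Fin N) A)) (β z (e i)) := by
    intro i z
    have hz : z ∈ Submodule.span A (Set.range ⇑e) := by rw [Basis.span_eq]; trivial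
    induction hz using Submodule.span_induction with
    | mem w hw =>
      obtain ⟨k, rfl⟩ := hw
      rw [tau_basis, tau_basis]
      exact Top_comm (bco e β) (fun i j => skew_of_alt β hβ _ _) (fun i => hβ _) k i
    | zero => simp
    | add u v hu hv ihu ihv =>
      rw [map_add (tau e β), add_mul, mul_add]
      have : β (u + v) (e i) = β u (e i) + β v (e i) := by
        rw [map_add, LinearMap.add_apply]
      rw [this, map_add, ← ihu, ← ihv]
      abel
    | smul a u hu ihu =>
      rw [map_smul (tau e β), smul_mul_assoc, mul_smul_comm, ← smul_sub, ihu]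
      have : β (a • u) (e i) = a • β u (e i) := by rw [map_smul, LinearMap.smul_apply]
      rw [this, smul_eq_mul, map_mul, ← Algebra.smul_def]
  have hy : y ∈ Submodule.span A (Set.range ⇑e) := by rw [Basis.span_eq]; trivial
  induction hy using Submodule.span_induction with
  | mem w hw =>
    obtain ⟨k, rfl⟩ := hw
    exact hbase k x
  | zero => simp
  | add u v hu hv ihu ihv =>
    rw [map_add (tau e β), add_mul, mul_add, map_add, map_add, ← ihu, ← ihv]
    abel
  | smul a u hu ihu =>
    rw [map_smul (tau e β), smul_mul_assoc, mul_smul_comm, ← smul_sub, ihu,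
      map_smul, smul_eq_mul, map_mul, ← Algebra.smul_def]

noncomputable def rep (e : Basis (Fin N) A V) (β : V →ₗ[A] V →ₗ[A] A) :
    TensorAlgebra A V →ₐ[A] Module.End A (MvPolynomial (Fin N) A) :=
  TensorAlgebra.lift A (tau e β)

theorem rep_ι (e : Basis (Fin N) A V) (β : V →ₗ[A] V →ₗ[A] A) (x : V) :
    rep e β (TensorAlgebra.ι A x) = tau e β x :=
  TensorAlgebra.lift_ι_apply _ _

theorem rep_comm (e : Basis (Fin N) A V) (β : V →ₗ[A] V →ₗ[A] A)
    (hβ : ∀ x, β x x = 0) (x y : V) :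
    rep e β (TensorAlgebra.ι A x * TensorAlgebra.ι A y)
      - rep e β (TensorAlgebra.ι A y * TensorAlgebra.ι A x)
      = algebraMap A (Module.End A (MvPolynomial (Fin N) A)) (β x y) := by
  rw [map_mul, map_mul, rep_ι, rep_ι]
  exact tau_comm e β hβ x y

/-- ordered monomial in the tensor algebra -/
noncomputable def monL (e : Basis (Fin N) A V) (l : List (Fin N)) : TensorAlgebra A V :=
  (l.map fun i => TensorAlgebra.ι A (e i)).prod

theorem monL_nil (e : Basis (Fin N) A V) : monL e ([] : List (Fin N)) = 1 := rfl

theorem monL_cons (e : Basis (Fin N) A V) (i : Fin N) (l : List (Fin N)) :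
    monL e (i :: l) = TensorAlgebra.ι A (e i) * monL e l := by
  simp [monL]

end Rep

/-! ### Straightening -/

section Straight

variable {V : Type*} [AddCommGroup V] [Module A V]
variable (e : Basis (Fin N) A V) (β : V →ₗ[A] V →ₗ[A] A)
variable (r : TensorAlgebra A V → TensorAlgebra A V → Prop)

noncomputable def Phi : MvPolynomial (Fin N) A →ₗ[A] RingQuot r :=
  Basis.constr (basisMonomials (Fin N) A) A fun γ =>
    RingQuot.mkAlgHom A r (monL e (srt γ))

theorem Phi_monomial (γ : Fin N →₀ ℕ) :
    Phi e r (monomial γ 1) = RingQuot.mkAlgHom A r (monL e (srt γ)) := by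
  have h := Basis.constr_basis (basisMonomials (Fin N) A) A
    (fun γ => RingQuot.mkAlgHom A r (monL e (srt γ))) γ
  rwa [coe_basisMonomials] at h

theorem Phi_one : Phi e r (1 : MvPolynomial (Fin N) A) = 1 := by
  have h1 : (1 : MvPolynomial (Fin N) A) = monomial 0 1 := by
    rw [monomial_zero', C_1]
  rw [h1, Phi_monomial, srt_zero, monL_nil, map_one]

theorem straight_easy
    (i : Fin N) (γ : Fin N →₀ ℕ) (h : ∀ m, i < m → γ m = 0) :
    RingQuot.mkAlgHom A r (TensorAlgebra.ι A (e i)) * Phi e r (monomial γ 1)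
      = Phi e r (Top (bco e β) i (monomial γ 1)) := by
  rw [Top_monomial_easy _ _ _ h, Phi_monomial, Phi_monomial]
  have hsorted : (i :: srt γ).Pairwise (fun a b : Fin N => b ≤ a) := by
    rw [List.pairwise_cons]
    refine ⟨fun x hx => ?_, srt_sorted γ⟩
    by_contra hc
    push_neg at hc
    exact mem_srt.mp hx (h x hc)
  have hs : srt (γ + single i 1) = i :: srt γ := by
    have h2 : cnt (i :: srt γ) = γ + single i 1 := by rw [cnt_cons, cnt_srt]
    rw [← h2, srt_cnt hsorted]
  rw [hs, monL_cons, map_mul]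

theorem straight
    (hrel : ∀ x y : V, RingQuot.mkAlgHom A r (TensorAlgebra.ι A x)
        * RingQuot.mkAlgHom A r (TensorAlgebra.ι A y)
      = RingQuot.mkAlgHom A r (TensorAlgebra.ι A y)
          * RingQuot.mkAlgHom A r (TensorAlgebra.ι A x)
        + algebraMap A (RingQuot r) (β x y))
    (hβ : ∀ x, β x x = 0) (p : ℕ) :
    ∀ (i : Fin N) (γ : Fin N →₀ ℕ), deg γ ≤ p →
    RingQuot.mkAlgHom A r (TensorAlgebra.ι A (e i)) * Phi e r (monomial γ 1)
      = Phi e r (Top (bco e β) i (monomial γ 1)) := by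
  induction p with
  | zero =>
    intro i γ hγ
    refine straight_easy e β r i γ fun m _ => ?_
    have h0 : deg γ = 0 := Nat.le_zero.mp hγ
    exact Finset.sum_eq_zero_iff.mp h0 m (Finset.mem_univ m)
  | succ p IH =>
    intro i γ hγ
    rcases hl : srt γ with _ | ⟨j, J⟩
    · have hγ0 : γ = 0 := by
        have h2 := cnt_srt γ
        rw [hl, cnt_nil] at h2
        exact h2.symm
      exact straight_easy e β r i γ fun m _ => by simp [hγ0]
    · have hsort : (j :: J).Pairwise (fun a b : Fin N => b ≤ a) := hl ▸ srt_sorted γ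
      have hJs : J.Pairwise (fun a b : Fin N => b ≤ a) := (List.pairwise_cons.mp hsort).2
      have hJle : ∀ x ∈ J, x ≤ j := (List.pairwise_cons.mp hsort).1
      have hγeq : γ = cnt (j :: J) := by rw [← hl, cnt_srt]
      by_cases hij : j ≤ i
      · refine straight_easy e β r i γ fun m hm => ?_
        rw [hγeq, cnt_apply, List.count_eq_zero]
        intro hmem
        rcases List.mem_cons.mp hmem with rfl | hmem
        · exact absurd hij (not_le.mpr hm)
        · exact absurd (le_trans (hJle m hmem) hij) (not_le.mpr hm)
      · push_neg at hij
        set δ := cnt J with hδdef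
        have hsrtJ : srt δ = J := srt_cnt hJs
        have hδm : ∀ m, j < m → δ m = 0 := by
          intro m hm
          rw [hδdef, cnt_apply, List.count_eq_zero]
          intro hmem
          exact absurd (hJle m hmem) (not_le.mpr hm)
        have hγδ : γ = δ + single j 1 := by rw [hγeq, cnt_cons]
        have hdegδ : deg δ ≤ p := by
          have hd : deg γ = deg δ + 1 := by rw [hγδ, deg_add_single]
          omega
        have hPhiγ : Phi e r (monomial γ 1)
            = RingQuot.mkAlgHom A r (TensorAlgebra.ι A (e j)) * Phi e r (monomial δ 1) := by
          rw [Phi_monomial, Phi_monomial, hsrtJ, hl, monL_cons, map_mul]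
        have hstep : RingQuot.mkAlgHom A r (TensorAlgebra.ι A (e j))
            * Phi e r (Top (bco e β) i (monomial δ 1))
            = Phi e r (Top (bco e β) j (Top (bco e β) i (monomial δ 1))) := by
          rw [Top_monomial (bco e β) i δ, map_add (Phi e r), mul_add,
            map_add (Top (bco e β) j), map_add (Phi e r)]
          congr 1
          · refine straight_easy e β r j (δ + single i 1) fun m hm => ?_
            rw [Finsupp.add_apply, hδm m hm, single_apply,
              if_neg (ne_of_lt (lt_trans hij hm))]
            rfl
          · rw [map_sum (Phi e r), Finset.mul_sum, map_sum (Top (bco e β) j),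
              map_sum (Phi e r)]
            refine Finset.sum_congr rfl fun m _ => ?_
            rw [map_smul (Phi e r), map_smul (Top (bco e β) j), map_smul (Phi e r),
              mul_smul_comm]
            rcases Nat.eq_zero_or_pos (δ m) with h0 | hpos
            · rw [h0]
              simp
            · congr 1
              exact IH j (δ - single m 1) (le_trans (deg_tsub_le δ m) hdegδ)
        calc RingQuot.mkAlgHom A r (TensorAlgebra.ι A (e i)) * Phi e r (monomial γ 1)
            = RingQuot.mkAlgHom A r (TensorAlgebra.ι A (e i))
              * (RingQuot.mkAlgHom A r (TensorAlgebra.ι A (e j)) * Phi e r (monomial δ 1)) := by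
              rw [hPhiγ]
          _ = RingQuot.mkAlgHom A r (TensorAlgebra.ι A (e j))
              * (RingQuot.mkAlgHom A r (TensorAlgebra.ι A (e i)) * Phi e r (monomial δ 1))
              + algebraMap A (RingQuot r) (β (e i) (e j)) * Phi e r (monomial δ 1) := by
              rw [← mul_assoc, hrel (e i) (e j), add_mul, mul_assoc]
          _ = RingQuot.mkAlgHom A r (TensorAlgebra.ι A (e j))
              * Phi e r (Top (bco e β) i (monomial δ 1))
              + algebraMap A (RingQuot r) (β (e i) (e j)) * Phi e r (monomial δ 1) := by
              rw [IH i δ hdegδ]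
          _ = Phi e r (Top (bco e β) j (Top (bco e β) i (monomial δ 1)))
              + algebraMap A (RingQuot r) (β (e i) (e j)) * Phi e r (monomial δ 1) := by
              rw [hstep]
          _ = Phi e r (Top (bco e β) i (monomial γ 1)) := by
              have hcm := Top_comm (bco e β) (fun i j => skew_of_alt β hβ _ _)
                (fun i => hβ _) i j
              have h2 := DFunLike.congr_fun hcm (monomial δ 1)
              simp only [LinearMap.sub_apply, Module.End.mul_apply,
                Module.algebraMap_end_apply] at h2
              have h3 : Top (bco e β) j (Top (bco e β) i (monomial δ 1))
                  = Top (bco e β) i (Top (bco e β) j (monomial δ 1))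
                    - bco e β i j • monomial δ 1 := by
                rw [← h2]
                abel
              rw [h3, map_sub, map_smul, Top_monomial_easy (bco e β) j δ hδm, ← hγδ]
              rw [← Algebra.smul_def]
              have : bco e β i j = β (e i) (e j) := rfl
              rw [this]
              abel

end Straight

/-! ### The generic PBW theorem -/

theorem pbw_generic {V : Type*} [AddCommGroup V] [Module A V]
    (e : Basis (Fin N) A V) (β : V →ₗ[A] V →ₗ[A] A)
    (hβ : ∀ x, β x x = 0)
    (r : TensorAlgebra A V → TensorAlgebra A V → Prop)
    (hrel : ∀ x y : V, RingQuot.mkAlgHom A r (TensorAlgebra.ι A x)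
        * RingQuot.mkAlgHom A r (TensorAlgebra.ι A y)
      = RingQuot.mkAlgHom A r (TensorAlgebra.ι A y)
          * RingQuot.mkAlgHom A r (TensorAlgebra.ι A x)
        + algebraMap A (RingQuot r) (β x y))
    (hlift : ∀ ⦃a b⦄, r a b → rep e β a = rep e β b) :
    (LinearIndependent A fun I : {l : List (Fin N) // l.Pairwise fun a b => b ≤ a} =>
        RingQuot.mkAlgHom A r (monL e I.val)) ∧
    (Submodule.span A (Set.range fun I : {l : List (Fin N) // l.Pairwise fun a b => b ≤ a} =>
        RingQuot.mkAlgHom A r (monL e I.val)) = ⊤) := by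
  classical
  set ρ : RingQuot r →ₐ[A] Module.End A (MvPolynomial (Fin N) A) :=
    RingQuot.liftAlgHom A ⟨rep e β, hlift⟩ with hρdef
  have hρ : ∀ t, ρ (RingQuot.mkAlgHom A r t) = rep e β t := fun t =>
    RingQuot.liftAlgHom_mkAlgHom_apply A (rep e β) hlift t
  set Ψ : RingQuot r →ₗ[A] MvPolynomial (Fin N) A :=
    (LinearMap.applyₗ (1 : MvPolynomial (Fin N) A)).comp ρ.toLinearMap with hΨdef
  have hΨapp : ∀ w, Ψ w = ρ w 1 := fun w => rfl
  -- action of monomials on 1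
  have hΨmon : ∀ l : List (Fin N), l.Pairwise (fun a b => b ≤ a) →
      Ψ (RingQuot.mkAlgHom A r (monL e l)) = monomial (cnt l) 1 := by
    intro l
    induction l with
    | nil =>
      intro _
      rw [hΨapp, monL_nil, cnt_nil, monomial_zero', C_1,
        map_one (RingQuot.mkAlgHom A r), map_one ρ]
      exact Module.End.one_apply 1
    | cons i J ihJ =>
      intro hsort
      have hJ := (List.pairwise_cons.mp hsort).2
      have hle := (List.pairwise_cons.mp hsort).1
      rw [hΨapp, monL_cons, map_mul, map_mul, Module.End.mul_apply]
      have h1 : ρ (RingQuot.mkAlgHom A r (monL e J)) 1 = monomial (cnt J) 1 := by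
        rw [← hΨapp]; exact ihJ hJ
      rw [h1, hρ, rep_ι, tau_basis]
      rw [Top_monomial_easy _ i (cnt J) fun m hm => by
        rw [cnt_apply, List.count_eq_zero]
        intro hmem
        exact absurd (hle m hmem) (not_le.mpr hm)]
      rw [cnt_cons]
  constructor
  · -- linear independence
    apply LinearIndependent.of_comp Ψ
    have hfun : (⇑Ψ ∘ fun I : {l : List (Fin N) // l.Pairwise fun a b => b ≤ a} =>
          RingQuot.mkAlgHom A r (monL e I.val))
        = (fun γ : Fin N →₀ ℕ => (monomial γ (1 : A) : MvPolynomial (Fin N) A))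
            ∘ fun I : {l : List (Fin N) // l.Pairwise fun a b => b ≤ a} => cnt I.val :=
      funext fun I => hΨmon I.val I.property
    rw [hfun]
    have h1 : LinearIndependent A
        (fun γ : Fin N →₀ ℕ => (monomial γ (1 : A) : MvPolynomial (Fin N) A)) := by
      have h2 := (basisMonomials (Fin N) A).linearIndependent
      rwa [coe_basisMonomials] at h2
    refine h1.comp _ fun I J h => Subtype.ext ?_
    rw [← srt_cnt I.property, ← srt_cnt J.property, h]
  · -- spanning
    have hmulQ : ∀ t : TensorAlgebra A V, ∀ q : MvPolynomial (Fin N) A,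
        Phi e r (ρ (RingQuot.mkAlgHom A r t) q) = RingQuot.mkAlgHom A r t * Phi e r q := by
      intro t
      induction t using TensorAlgebra.induction with
      | algebraMap a =>
        intro q
        rw [AlgHom.commutes, AlgHom.commutes, Module.algebraMap_end_apply, map_smul,
          Algebra.smul_def]
      | ι x =>
        -- first reduce to basis vectors of V, then to monomials
        have hx : x ∈ Submodule.span A (Set.range ⇑e) := by rw [Basis.span_eq]; trivial
        induction hx using Submodule.span_induction with
        | mem w hw =>
          obtain ⟨i, rfl⟩ := hw
          intro q
          rw [hρ, rep_ι, tau_basis]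
          have hq : q ∈ Submodule.span A (Set.range ⇑(basisMonomials (Fin N) A)) := by
            rw [Basis.span_eq]; trivial
          induction hq using Submodule.span_induction with
          | mem w hw =>
            obtain ⟨γ, rfl⟩ := hw
            have hbm : (basisMonomials (Fin N) A) γ = monomial γ 1 := by
              rw [coe_basisMonomials]
            rw [hbm]
            exact (straight e β r hrel hβ (deg γ) i γ le_rfl).symm
          | zero => rw [map_zero, map_zero, mul_zero]
          | add u v hu hv ihu ihv =>
            rw [map_add, map_add (Phi e r), ihu, ihv, map_add (Phi e r), mul_add]
          | smul a u hu ihu =>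
            rw [map_smul, map_smul (Phi e r), ihu, map_smul (Phi e r), mul_smul_comm]
        | zero =>
          intro q
          rw [map_zero, map_zero, map_zero, LinearMap.zero_apply, map_zero, zero_mul]
        | add u v hu hv ihu ihv =>
          intro q
          rw [map_add, map_add, map_add, LinearMap.add_apply, map_add, ihu q, ihv q,
            add_mul]
        | smul a u hu ihu =>
          intro q
          rw [map_smul, map_smul, map_smul, LinearMap.smul_apply, map_smul, ihu q,
            smul_mul_assoc]
      | mul a b iha ihb =>
        intro q
        rw [map_mul, map_mul, Module.End.mul_apply, iha, ihb, mul_assoc]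
      | add a b iha ihb =>
        intro q
        rw [map_add, map_add, LinearMap.add_apply, map_add, iha q, ihb q, add_mul]
    rw [eq_top_iff]
    rintro w -
    obtain ⟨t, rfl⟩ := RingQuot.mkAlgHom_surjective A r w
    have h1 : RingQuot.mkAlgHom A r t = Phi e r (ρ (RingQuot.mkAlgHom A r t) 1) := by
      rw [hmulQ t 1, Phi_one, mul_one]
    rw [h1]
    have h2 : ∀ q : MvPolynomial (Fin N) A, Phi e r q ∈ Submodule.span A
        (Set.range fun I : {l : List (Fin N) // l.Pairwise fun a b => b ≤ a} =>
          RingQuot.mkAlgHom A r (monL e I.val)) := by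
      intro q
      have hq : q ∈ Submodule.span A (Set.range ⇑(basisMonomials (Fin N) A)) := by
        rw [Basis.span_eq]; trivial
      induction hq using Submodule.span_induction with
      | mem w hw =>
        obtain ⟨γ, rfl⟩ := hw
        have hbm : (basisMonomials (Fin N) A) γ = monomial γ 1 := by
          rw [coe_basisMonomials]
        rw [hbm, Phi_monomial]
        exact Submodule.subset_span ⟨⟨srt γ, srt_sorted γ⟩, rfl⟩
      | zero => rw [map_zero]; exact Submodule.zero_mem _
      | add u v hu hv ihu ihv => rw [map_add]; exact Submodule.add_mem _ ihu ihv
      | smul a u hu ihu => rw [map_smul]; exact Submodule.smul_mem _ a ihu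
    exact h2 _




end PBWAux

/-- Poincaré–Birkhoff–Witt: let `V` be free of rank `2ν` over `A` with a
nondegenerate alternating form `ω` and a basis `e` adapted to a Lagrangian splitting
`V = L ⊕ L'` (the first `ν` vectors span the Lagrangian `L`, the last `ν` span the
Lagrangian `L'`).  Then the images `μ_W(e_I)`, `I ∈ Υ₀`, of the ordered monomials form
an `A`-basis of the Weyl algebra `W(V)`, and the images `μ_S(e_I)` form an `A`-basis of
the symmetric algebra `S(V)`. -/
theorem weyl_pbw_basis
    (A V : Type*) [CommRing A] [AddCommGroup V] [Module A V]
    (ν : ℕ) (e : Basis (Fin (2 * ν)) A V)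
    (ω : V →ₗ[A] V →ₗ[A] A) (lam : A)
    (halt : ∀ x : V, ω x x = 0)
    (hnondeg : ∀ x : V, (∀ y : V, ω x y = 0) → x = 0)
    (hL : ∀ i j : Fin (2 * ν), (i : ℕ) < ν → (j : ℕ) < ν → ω (e i) (e j) = 0)
    (hL' : ∀ i j : Fin (2 * ν), ν ≤ (i : ℕ) → ν ≤ (j : ℕ) → ω (e i) (e j) = 0) :
    (LinearIndependent A fun I : NonincSeq ν =>
        muW A V ω lam (tensorMon A V e I.val)) ∧
    (Submodule.span A
        (Set.range fun I : NonincSeq ν => muW A V ω lam (tensorMon A V e I.val)) = ⊤) ∧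
    (LinearIndependent A fun I : NonincSeq ν => muS A V (tensorMon A V e I.val)) ∧
    (Submodule.span A
        (Set.range fun I : NonincSeq ν => muS A V (tensorMon A V e I.val)) = ⊤) := by
  classical
  have hβW : ∀ x : V, (lam • ω) x x = 0 := fun x => by
    simp [LinearMap.smul_apply, halt x]
  have hrelW : ∀ x y : V,
      RingQuot.mkAlgHom A (weylRel A V ω lam) (TensorAlgebra.ι A x)
        * RingQuot.mkAlgHom A (weylRel A V ω lam) (TensorAlgebra.ι A y)
      = RingQuot.mkAlgHom A (weylRel A V ω lam) (TensorAlgebra.ι A y)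
          * RingQuot.mkAlgHom A (weylRel A V ω lam) (TensorAlgebra.ι A x)
        + algebraMap A (RingQuot (weylRel A V ω lam)) ((lam • ω) x y) := by
    intro x y
    have h := RingQuot.mkAlgHom_rel (s := weylRel A V ω lam) A ⟨x, y, rfl, rfl⟩
    rw [map_sub, map_mul, map_mul, AlgHom.commutes] at h
    have h2 : ((lam • ω) x y : A) = lam * ω x y := by
      simp [LinearMap.smul_apply]
    rw [h2]
    rw [sub_eq_iff_eq_add] at h
    rw [h, add_comm]
  have hliftW : ∀ ⦃a b : TensorAlgebra A V⦄, weylRel A V ω lam a b →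
      PBWAux.rep e (lam • ω) a = PBWAux.rep e (lam • ω) b := by
    rintro a b ⟨x, y, rfl, rfl⟩
    have h := PBWAux.rep_comm e (lam • ω) hβW x y
    rw [map_sub, h, AlgHom.commutes]
    congr 1
  have hW := PBWAux.pbw_generic e (lam • ω) hβW (weylRel A V ω lam) hrelW hliftW
  have hβS : ∀ x : V, (0 : V →ₗ[A] V →ₗ[A] A) x x = 0 := fun x => by simp
  have hrelS : ∀ x y : V,
      RingQuot.mkAlgHom A (symCRel A V) (TensorAlgebra.ι A x)
        * RingQuot.mkAlgHom A (symCRel A V) (TensorAlgebra.ι A y)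
      = RingQuot.mkAlgHom A (symCRel A V) (TensorAlgebra.ι A y)
          * RingQuot.mkAlgHom A (symCRel A V) (TensorAlgebra.ι A x)
        + algebraMap A (RingQuot (symCRel A V)) ((0 : V →ₗ[A] V →ₗ[A] A) x y) := by
    intro x y
    have h := RingQuot.mkAlgHom_rel (s := symCRel A V) A ⟨x, y, rfl, rfl⟩
    rw [map_mul, map_mul] at h
    simpa using h
  have hliftS : ∀ ⦃a b : TensorAlgebra A V⦄, symCRel A V a b →
      PBWAux.rep e (0 : V →ₗ[A] V →ₗ[A] A) a = PBWAux.rep e (0 : V →ₗ[A] V →ₗ[A] A) b := by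
    rintro a b ⟨x, y, rfl, rfl⟩
    have h := PBWAux.rep_comm e (0 : V →ₗ[A] V →ₗ[A] A) hβS x y
    simp only [LinearMap.zero_apply, map_zero] at h
    exact sub_eq_zero.mp h
  have hS := PBWAux.pbw_generic e (0 : V →ₗ[A] V →ₗ[A] A) hβS (symCRel A V) hrelS hliftS
  exact ⟨hW.1, hW.2, hS.1, hS.2⟩
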